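/- Let $H \in \mathbb{R}^{n\times n}$ be positive definite, $D$ negative semi-definite, $J_r \in \mathbb{R}^{k\times n}$ have full row rank, and $\Lambda_r \in \mathbb{R}^{k\times k}$ a diagonal matrix with strictly positive diagonal entries. Then the block matrix $\begin{bmatrix} H - D & -J_r^T \\ \Lambda_r J_r & 0 \end{bmatrix}$ is non-singular. -/

import Mathlib

open Matrix

lemma aux_inj {n k : ℕ} (Jr : Matrix (Fin k) (Fin n) ℝ) (hJr : Jr.rank = k) :
    Function.Injective Jrᵀ.mulVecLin := by
  rw [← LinearMap.ker_eq_bot]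
  have hr : Jrᵀ.rank = k := by rw [Matrix.rank_transpose]; exact hJr
  have h := Jrᵀ.mulVecLin.finrank_range_add_finrank_ker
  rw [Matrix.rank] at hr
  rw [hr] at h
  simp only [Module.finrank_pi, Fintype.card_fin] at h
  have hker : Module.finrank ℝ (LinearMap.ker Jrᵀ.mulVecLin) = 0 := by omega
  exact Submodule.finrank_eq_zero.mp hker

theorem stmt14 (n k : ℕ) (H D : Matrix (Fin n) (Fin n) ℝ)
    (hH : H.PosDef) (hD : (-D).PosSemidef)
    (Jr : Matrix (Fin k) (Fin n) ℝ) (hJr : Jr.rank = k)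
    (Λ : Fin k → ℝ) (hΛ : ∀ i, 0 < Λ i) :
    IsUnit (Matrix.fromBlocks (H - D) (-Jrᵀ) (Matrix.diagonal Λ * Jr)
      (0 : Matrix (Fin k) (Fin k) ℝ)).det := by
  have hA : (H - D).PosDef := by
    have := hH.add_posSemidef hD
    simpa [sub_eq_add_neg] using this
  rw [isUnit_iff_ne_zero]
  intro hdet
  obtain ⟨v, hv, hMv⟩ := (Matrix.exists_mulVec_eq_zero_iff).mpr hdet
  set x : Fin n → ℝ := v ∘ Sum.inl with hx
  set y : Fin k → ℝ := v ∘ Sum.inr with hy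
  have hvelim : v = Sum.elim x y := by funext i; cases i <;> rfl
  rw [hvelim, Matrix.fromBlocks_mulVec] at hMv
  have h1 : (H - D) *ᵥ x + (-Jrᵀ) *ᵥ y = 0 := by
    funext i; exact congrFun hMv (Sum.inl i)
  have h2 : ∀ i, ((Matrix.diagonal Λ * Jr) *ᵥ x) i = 0 := by
    intro i
    have := congrFun hMv (Sum.inr i)
    simpa using this
  have hJx : Jr *ᵥ x = 0 := by
    funext i
    have := h2 i
    rw [← Matrix.mulVec_mulVec, Matrix.mulVec_diagonal] at this
    have hΛi := (hΛ i).ne'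
    exact (mul_eq_zero.mp this).resolve_left hΛi
  have hAx : (H - D) *ᵥ x = Jrᵀ *ᵥ y := by
    have h := h1
    rw [Matrix.neg_mulVec, add_neg_eq_zero] at h
    exact h
  have hquad : x ⬝ᵥ ((H - D) *ᵥ x) = 0 := by
    rw [hAx, Matrix.dotProduct_mulVec, Matrix.vecMul_transpose, hJx]
    simp
  have hx0 : x = 0 := by
    by_contra hxne
    have := hA.dotProduct_mulVec_pos hxne
    rw [show star x = x from funext fun i => rfl, hquad] at this
    exact lt_irrefl 0 this
  have hy0 : y = 0 := by
    have hJty : Jrᵀ *ᵥ y = 0 := by rw [← hAx, hx0, Matrix.mulVec_zero]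
    exact aux_inj Jr hJr (a₁ := y) (a₂ := 0)
      (by rw [Matrix.mulVecLin_apply, Matrix.mulVecLin_apply, hJty, Matrix.mulVec_zero])
  apply hv
  rw [hvelim, hx0, hy0]
  funext i; cases i <;> simp
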